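/- Let $q$ be a prime power, let $\mathbb{F}_q$ be a finite field with $q$ elements, let $r \geq 2$, let $c_1, \ldots, c_r, a_1, \ldots, a_r \in \mathbb{F}_q^*$, and let $N$ be the minimum of the multiplicative orders of the elements $a_i/a_j$ for $i \neq j$ in $\mathbb{F}_q^*$. Then the number of integers $m \in [0, q-2]$ such that $\sum_{i=1}^r c_i a_i^m = 0$ is at most $4(q-1) N^{-1/2^{r-2}}$. -/

import Mathlib

open scoped BigOperators
open Finset

namespace FFZ

lemma pow_mod_eq {M : Type*} [Monoid M] {n : ℕ} (x : M) (hx : x ^ n = 1) (k : ℕ) :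
    x ^ (k % n) = x ^ k := by
  conv_rhs => rw [← Nat.mod_add_div k n]
  rw [pow_add, pow_mul, hx, one_pow, mul_one]

lemma rsq_le (s : ℕ) : (s + 2) ^ 2 ≤ 4 ^ 2 ^ s := by
  induction s with
  | zero => norm_num
  | succ s IH =>
    have h1 : s + 3 ≤ (s + 2) ^ 2 := by nlinarith
    calc (s + 3) ^ 2 ≤ ((s + 2) ^ 2) ^ 2 := Nat.pow_le_pow_left h1 2
      _ ≤ (4 ^ 2 ^ s) ^ 2 := Nat.pow_le_pow_left IH 2
      _ = 4 ^ 2 ^ (s + 1) := by rw [← pow_mul, pow_succ]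

variable {F : Type} [Field F] [Fintype F]

open scoped Classical in
noncomputable def Zset (n : ℕ) [NeZero n] (r : ℕ) (c a : Fin r → Fˣ) : Finset (ZMod n) :=
  univ.filter fun m => ∑ i, (c i : F) * (a i : F) ^ (ZMod.val m) = 0

open scoped Classical in
lemma mem_Zset {n : ℕ} [NeZero n] {r : ℕ} {c a : Fin r → Fˣ} {m : ZMod n} :
    m ∈ Zset (F := F) n r c a ↔ ∑ i, (c i : F) * (a i : F) ^ (ZMod.val m) = 0 := by
  simp [Zset]

open scoped Classical in
lemma card_ker_mul_orderOf_le {n : ℕ} [NeZero n] (hn : Fintype.card Fˣ = n) (u : Fˣ) :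
    (univ.filter fun d : ZMod n => u ^ (ZMod.val d) = 1).card * orderOf u ≤ n := by
  set k := orderOf u with hk
  have hkn : k ∣ n := hn ▸ orderOf_dvd_card
  have hcard : (univ.filter fun d : ZMod n => u ^ (ZMod.val d) = 1).card ≤ n / k := by
    have hmaps : ∀ d ∈ (univ.filter fun d : ZMod n => u ^ (ZMod.val d) = 1),
        (ZMod.val d) / k ∈ range (n / k) := by
      intro d hd
      simp only [mem_filter] at hd
      exact mem_range.2 (Nat.div_lt_div_of_lt_of_dvd hkn (ZMod.val_lt d))
    rw [← Finset.card_range (n / k)]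
    apply Finset.card_le_card_of_injOn (fun d => ZMod.val d / k) hmaps
    intro d1 h1 d2 h2 heq
    simp only [coe_filter, Set.mem_setOf_eq, mem_univ, true_and] at h1 h2
    have hd1 : k ∣ ZMod.val d1 := orderOf_dvd_of_pow_eq_one h1
    have hd2 : k ∣ ZMod.val d2 := orderOf_dvd_of_pow_eq_one h2
    have : ZMod.val d1 = ZMod.val d2 := by
      simp only [] at heq
      rw [← Nat.div_mul_cancel hd1, ← Nat.div_mul_cancel hd2, heq]
    exact ZMod.val_injective n this
  calc (univ.filter fun d : ZMod n => u ^ (ZMod.val d) = 1).card * k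
      ≤ (n / k) * k := Nat.mul_le_mul_right _ hcard
    _ ≤ n := Nat.div_mul_le_self n k

set_option maxRecDepth 8000 in
open scoped Classical in
lemma key {n : ℕ} [NeZero n] (hn : Fintype.card Fˣ = n) :
    ∀ (s : ℕ) (c a : Fin (s + 2) → Fˣ) (N : ℕ), 1 ≤ N →
      (∀ i j : Fin (s + 2), i ≠ j → N ≤ orderOf (a i / a j)) →
      (Zset (F := F) n (s + 2) c a).card ^ 2 ^ s * N ≤ (4 * n) ^ 2 ^ s := by
  have hx : ∀ x : Fˣ, x ^ n = 1 := fun x => hn ▸ pow_card_eq_one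
  have hval_add : ∀ (x : Fˣ) (m m' : ZMod n),
      x ^ (m + m').val = x ^ m.val * x ^ m'.val := by
    intro x m m'
    rw [ZMod.val_add, pow_mod_eq x (hx x), pow_add]
  intro s
  induction s with
  | zero =>
    intro c a N hN1 hNle
    simp only [pow_zero, pow_one]
    set Z := Zset (F := F) n 2 c a with hZ
    rcases Z.eq_empty_or_nonempty with hZe | ⟨m₀, hm₀⟩
    · simp [hZe]
    · have huval : ∀ m ∈ Z,
          ((a 0 / a 1 : Fˣ) : F) ^ (ZMod.val m) = -(c 1 : F) / (c 0 : F) := by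
        intro m hm
        have h := mem_Zset.1 hm
        rw [Fin.sum_univ_two] at h
        have h0 : (c 0 : F) ≠ 0 := Units.ne_zero _
        have h1 : ((a 1 : F)) ^ (ZMod.val m) ≠ 0 := pow_ne_zero _ (Units.ne_zero _)
        rw [Units.val_div_eq_div_val, div_pow]
        field_simp
        linear_combination h
      have hueq : ∀ m ∈ Z, (a 0 / a 1) ^ (ZMod.val m) = (a 0 / a 1) ^ (ZMod.val m₀) := by
        intro m hm
        apply Units.ext
        rw [Units.val_pow_eq_pow_val, Units.val_pow_eq_pow_val, huval m hm, huval m₀ hm₀]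
      have hker : ∀ m ∈ Z, (a 0 / a 1) ^ (ZMod.val (m - m₀)) = 1 := by
        intro m hm
        have h := hval_add (a 0 / a 1) (m - m₀) m₀
        rw [sub_add_cancel, hueq m hm] at h
        exact right_eq_mul.1 h
      have hinj : Z.card ≤
          (univ.filter fun d : ZMod n => (a 0 / a 1) ^ (ZMod.val d) = 1).card := by
        apply Finset.card_le_card_of_injOn (fun m => m - m₀)
        · intro m hm
          simp only [mem_coe, mem_filter, mem_univ, true_and]
          exact hker m hm
        · intro x _ y _ h
          exact sub_left_inj.1 h
      calc Z.card * N ≤ Z.card * orderOf (a 0 / a 1) :=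
            Nat.mul_le_mul_left _ (hNle 0 1 (by decide))
        _ ≤ (univ.filter fun d : ZMod n => (a 0 / a 1) ^ (ZMod.val d) = 1).card
              * orderOf (a 0 / a 1) := Nat.mul_le_mul_right _ hinj
        _ ≤ n := card_ker_mul_orderOf_le hn _
        _ ≤ 4 * n := Nat.le_mul_of_pos_left n (by norm_num)
  | succ s IH =>
    intro c a N hN1 hNle
    have hN0 : 0 < N := hN1
    set K := 2 ^ s with hK
    have hK1 : 1 ≤ K := Nat.one_le_two_pow
    set Z : Finset (ZMod n) := Zset (F := F) n (s + 1 + 2) c a with hZdef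
    set z := Z.card with hz
    set j₀ : Fin (s + 1 + 2) := Fin.last (s + 2) with hj₀
    set cnt : ZMod n → ℕ := fun d => (Z.filter fun m => m + d ∈ Z).card with hcnt
    -- counting identity
    have hcount : z * z = ∑ d : ZMod n, cnt d := by
      have hfix : ∀ m : ZMod n, (univ.filter fun d : ZMod n => m + d ∈ Z).card = z := by
        intro m
        rw [hz]
        apply Finset.card_bij (fun d _ => m + d)
        · intro d hd
          exact (mem_filter.1 hd).2
        · intro d1 _ d2 _ h
          exact add_left_cancel h
        · intro y hy
          exact ⟨y - m, mem_filter.2 ⟨mem_univ _, by rwa [add_sub_cancel]⟩,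
            add_sub_cancel m y⟩
      calc z * z = ∑ _m ∈ Z, z := by rw [Finset.sum_const, smul_eq_mul]
        _ = ∑ m ∈ Z, (univ.filter fun d : ZMod n => m + d ∈ Z).card :=
            Finset.sum_congr rfl fun m _ => (hfix m).symm
        _ = ∑ m ∈ Z, ∑ d : ZMod n, if m + d ∈ Z then 1 else 0 :=
            Finset.sum_congr rfl fun m _ => Finset.card_filter _ _
        _ = ∑ d : ZMod n, ∑ m ∈ Z, if m + d ∈ Z then 1 else 0 := Finset.sum_comm
        _ = ∑ d : ZMod n, cnt d :=
            Finset.sum_congr rfl fun d _ => (Finset.card_filter _ _).symm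
    set good : ZMod n → Prop :=
      fun d => ∀ i : Fin (s + 1 + 2), i ≠ j₀ → (a i / a j₀) ^ (ZMod.val d) ≠ 1 with hgood
    -- bad count
    have hbad1 : ∀ i : Fin (s + 1 + 2), i ≠ j₀ →
        (univ.filter fun d : ZMod n => (a i / a j₀) ^ (ZMod.val d) = 1).card * N ≤ n := by
      intro i hi
      calc (univ.filter fun d : ZMod n => (a i / a j₀) ^ (ZMod.val d) = 1).card * N
          ≤ (univ.filter fun d : ZMod n => (a i / a j₀) ^ (ZMod.val d) = 1).card
              * orderOf (a i / a j₀) := Nat.mul_le_mul_left _ (hNle i j₀ hi)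
        _ ≤ n := card_ker_mul_orderOf_le hn _
    have hbadN : (univ.filter fun d : ZMod n => ¬ good d).card * N ≤ (s + 2) * n := by
      have hsub : (univ.filter fun d : ZMod n => ¬ good d) ⊆
          (univ.erase j₀).biUnion
            (fun i => univ.filter fun d : ZMod n => (a i / a j₀) ^ (ZMod.val d) = 1) := by
        intro d hd
        simp only [mem_filter, mem_univ, true_and, hgood, not_forall] at hd
        obtain ⟨i, hi, hieq⟩ := hd
        have hieq' : (a i / a j₀) ^ (ZMod.val d) = 1 := not_not.1 hieq
        exact Finset.mem_biUnion.2
          ⟨i, Finset.mem_erase.2 ⟨hi, mem_univ i⟩, mem_filter.2 ⟨mem_univ d, hieq'⟩⟩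
      calc (univ.filter fun d : ZMod n => ¬ good d).card * N
          ≤ (∑ i ∈ univ.erase j₀,
              (univ.filter fun d : ZMod n => (a i / a j₀) ^ (ZMod.val d) = 1).card) * N :=
            Nat.mul_le_mul_right _ (le_trans (card_le_card hsub) Finset.card_biUnion_le)
        _ = ∑ i ∈ univ.erase j₀,
              (univ.filter fun d : ZMod n => (a i / a j₀) ^ (ZMod.val d) = 1).card * N := by
            rw [Finset.sum_mul]
        _ ≤ ∑ _i ∈ univ.erase j₀, n :=
            Finset.sum_le_sum (fun i hi => hbad1 i (Finset.mem_erase.1 hi).1)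
        _ = (s + 2) * n := by
            rw [Finset.sum_const, smul_eq_mul, Finset.card_erase_of_mem (mem_univ _),
              card_univ, Fintype.card_fin]
            norm_num
    -- good d bound via IH
    have hgoodD : ∀ d : ZMod n, good d → cnt d ^ K * N ≤ (4 * n) ^ K := by
      intro d hgd
      have hw : ∀ i : Fin (s + 2),
          ((a i.castSucc : F) ^ (ZMod.val d) - (a j₀ : F) ^ (ZMod.val d)) ≠ 0 := by
        intro i hcontra
        have hne : i.castSucc ≠ j₀ := (Fin.castSucc_lt_last i).ne
        apply hgd i.castSucc hne
        apply Units.ext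
        rw [Units.val_pow_eq_pow_val, Units.val_div_eq_div_val, div_pow, Units.val_one]
        rw [div_eq_one_iff_eq (pow_ne_zero _ (Units.ne_zero _))]
        linear_combination hcontra
      set c' : Fin (s + 2) → Fˣ := fun i => c i.castSucc * Units.mk0 _ (hw i) with hc'
      set a' : Fin (s + 2) → Fˣ := fun i => a i.castSucc with ha'
      have hsubset : Z.filter (fun m => m + d ∈ Z) ⊆ Zset (F := F) n (s + 2) c' a' := by
        intro m hm
        obtain ⟨hm1, hm2⟩ := mem_filter.1 hm
        have h1 : ∑ i, (c i : F) * (a i : F) ^ (ZMod.val m) = 0 := mem_Zset.1 hm1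
        have h2 : ∑ i, (c i : F) * (a i : F) ^ (ZMod.val (m + d)) = 0 := mem_Zset.1 hm2
        have h2' : ∑ i, (c i : F) * ((a i : F) ^ (ZMod.val m) * (a i : F) ^ (ZMod.val d)) = 0 := by
          rw [← h2]
          apply Finset.sum_congr rfl
          intro i _
          congr 1
          calc ((a i : F)) ^ (ZMod.val m) * ((a i : F)) ^ (ZMod.val d)
              = (((a i) ^ (ZMod.val m) * (a i) ^ (ZMod.val d) : Fˣ) : F) := by push_cast; ring
            _ = (((a i) ^ (ZMod.val (m + d)) : Fˣ) : F) := by rw [← hval_add]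
            _ = (a i : F) ^ (ZMod.val (m + d)) := by push_cast; ring
        have hcomb : ∑ i, (c i : F) * (a i : F) ^ (ZMod.val m)
            * ((a i : F) ^ (ZMod.val d) - (a j₀ : F) ^ (ZMod.val d)) = 0 := by
          calc ∑ i, (c i : F) * (a i : F) ^ (ZMod.val m)
                * ((a i : F) ^ (ZMod.val d) - (a j₀ : F) ^ (ZMod.val d))
              = (∑ i, (c i : F) * ((a i : F) ^ (ZMod.val m) * (a i : F) ^ (ZMod.val d)))
                - (a j₀ : F) ^ (ZMod.val d) * ∑ i, (c i : F) * (a i : F) ^ (ZMod.val m) := by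
                rw [Finset.mul_sum, ← Finset.sum_sub_distrib]
                apply Finset.sum_congr rfl
                intro i _
                ring
            _ = 0 := by rw [h1, h2']; ring
        rw [Fin.sum_univ_castSucc (n := s + 2)] at hcomb
        simp only [← hj₀, sub_self, mul_zero, add_zero] at hcomb
        apply mem_Zset.2
        rw [← hcomb]
        apply Finset.sum_congr rfl
        intro i _
        simp only [hc', ha', Units.val_mul, Units.val_mk0]
        ring
      have hcard : cnt d ≤ (Zset (F := F) n (s + 2) c' a').card :=
        Finset.card_le_card hsubset
      have hNle' : ∀ i j : Fin (s + 2), i ≠ j → N ≤ orderOf (a' i / a' j) := by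
        intro i j hij
        exact hNle i.castSucc j.castSucc (fun h => hij (Fin.castSucc_injective _ h))
      calc cnt d ^ K * N ≤ (Zset (F := F) n (s + 2) c' a').card ^ K * N :=
          Nat.mul_le_mul_right _ (Nat.pow_le_pow_left hcard _)
        _ ≤ (4 * n) ^ K := IH c' a' N hN1 hNle'
    -- sup over good
    set G : Finset (ZMod n) := univ.filter good with hG
    set B : ℕ := G.sup cnt with hB
    have hBK : B ^ K * N ≤ (4 * n) ^ K := by
      rcases G.eq_empty_or_nonempty with hGe | hGne
      · rw [hB, hGe]
        simp [Nat.zero_pow (show 0 < K from hK1)]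
      · obtain ⟨d₀, hd₀, hsup⟩ := Finset.exists_mem_eq_sup G hGne cnt
        rw [hB, hsup]
        exact hgoodD d₀ ((mem_filter.1 hd₀).2)
    -- combine
    have hsum : z * z ≤ (univ.filter fun d : ZMod n => ¬ good d).card * z + n * B := by
      rw [hcount, ← Finset.sum_filter_add_sum_filter_not univ good cnt]
      have h1 : ∑ d ∈ G, cnt d ≤ n * B := by
        calc ∑ d ∈ G, cnt d ≤ G.card • B :=
            Finset.sum_le_card_nsmul _ _ _ (fun d hd => Finset.le_sup hd)
          _ ≤ n * B := by
              rw [smul_eq_mul]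
              apply Nat.mul_le_mul_right
              calc G.card ≤ (univ : Finset (ZMod n)).card := card_le_card (filter_subset _ _)
                _ = n := by rw [card_univ, ZMod.card]
      have h2 : ∑ d ∈ univ.filter (fun d : ZMod n => ¬ good d), cnt d
          ≤ (univ.filter fun d : ZMod n => ¬ good d).card * z := by
        refine le_trans (Finset.sum_le_card_nsmul _ _ z (fun d _ => ?_)) (by rw [smul_eq_mul])
        exact card_le_card (filter_subset _ _)
      rw [add_comm (∑ d ∈ G, cnt d)]
      exact Nat.add_le_add h2 h1
    have hzn : z ≤ n := by
      calc z ≤ (univ : Finset (ZMod n)).card := card_le_card (subset_univ Z)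
        _ = n := by rw [card_univ, ZMod.card]
    have hmain : z * z * N ≤ (s + 2) * n * z + n * B * N := by
      calc z * z * N
          ≤ ((univ.filter fun d : ZMod n => ¬ good d).card * z + n * B) * N :=
            Nat.mul_le_mul_right _ hsum
        _ = (univ.filter fun d : ZMod n => ¬ good d).card * N * z + n * B * N := by ring
        _ ≤ (s + 2) * n * z + n * B * N :=
            Nat.add_le_add_right (Nat.mul_le_mul_right _ hbadN) _
    -- final arithmetic
    have hgoal : (z * z) ^ K * N ≤ (16 * (n * n)) ^ K := by
      rcases le_or_gt N (16 ^ K) with hNc | hNc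
      · calc (z * z) ^ K * N ≤ (n * n) ^ K * 16 ^ K :=
            Nat.mul_le_mul (Nat.pow_le_pow_left (Nat.mul_le_mul hzn hzn) _) hNc
          _ = (16 * (n * n)) ^ K := by rw [← mul_pow]; ring_nf
      · rcases Nat.eq_zero_or_pos z with hz0 | hzpos
        · rw [hz0]
          simp [Nat.zero_pow (show 0 < K from hK1)]
        rcases le_or_gt ((s + 2) * n * z) (n * B * N) with hc | hc
        · -- dominated by good term
          have h1 : z * z * N ≤ 2 * (n * B) * N := by
            calc z * z * N ≤ (s + 2) * n * z + n * B * N := hmain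
              _ ≤ n * B * N + n * B * N := Nat.add_le_add_right hc _
              _ = 2 * (n * B) * N := by ring
          have h2 : z * z ≤ 2 * (n * B) := Nat.le_of_mul_le_mul_right h1 hN0
          calc (z * z) ^ K * N ≤ (2 * (n * B)) ^ K * N :=
              Nat.mul_le_mul_right _ (Nat.pow_le_pow_left h2 _)
            _ = (2 * n) ^ K * (B ^ K * N) := by rw [mul_pow, mul_pow]; ring
            _ ≤ (2 * n) ^ K * (4 * n) ^ K := Nat.mul_le_mul_left _ hBK
            _ = (8 * (n * n)) ^ K := by rw [← mul_pow]; ring_nf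
            _ ≤ (16 * (n * n)) ^ K :=
              Nat.pow_le_pow_left (Nat.mul_le_mul_right _ (by norm_num)) _
        · -- dominated by bad term
          have h1 : z * N * z ≤ 2 * ((s + 2) * n) * z := by
            calc z * N * z = z * z * N := by ring
              _ ≤ (s + 2) * n * z + n * B * N := hmain
              _ ≤ (s + 2) * n * z + (s + 2) * n * z := Nat.add_le_add_left hc.le _
              _ = 2 * ((s + 2) * n) * z := by ring
          have h2 : z * N ≤ 2 * ((s + 2) * n) := Nat.le_of_mul_le_mul_right h1 hzpos
          -- multiply target by 16^(K*K) and cancel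
          have hcancel : (z * z) ^ K * N * 16 ^ (K * K)
              ≤ (16 * (n * n)) ^ K * 16 ^ (K * K) := by
            calc (z * z) ^ K * N * 16 ^ (K * K)
                ≤ (z * z) ^ K * N * N ^ K := by
                  apply Nat.mul_le_mul_left
                  rw [pow_mul]
                  exact Nat.pow_le_pow_left hNc.le K
              _ ≤ (z * z) ^ K * (N * N ^ K) * N ^ (K - 1) := by
                  rw [← mul_assoc]
                  exact Nat.le_mul_of_pos_right _ (Nat.pow_pos hN0)
              _ = (z * N) ^ K * (z * N) ^ K := by
                  have : N * N ^ K * N ^ (K - 1) = N ^ K * N ^ K := by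
                    rw [← pow_succ', ← pow_add, ← pow_add]
                    congr 1
                    omega
                  rw [mul_assoc, this, mul_pow, mul_pow]
                  ring
              _ ≤ (2 * ((s + 2) * n)) ^ K * (2 * ((s + 2) * n)) ^ K :=
                  Nat.mul_le_mul (Nat.pow_le_pow_left h2 _) (Nat.pow_le_pow_left h2 _)
              _ = (4 * (s + 2) ^ 2) ^ K * (n * n) ^ K := by
                  rw [← mul_pow, ← mul_pow]
                  congr 1
                  ring
              _ ≤ (4 * 4 ^ K) ^ K * (n * n) ^ K := by
                  apply Nat.mul_le_mul_right
                  exact Nat.pow_le_pow_left (Nat.mul_le_mul_left _ (rsq_le s)) _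
              _ ≤ (16 * 16 ^ K) ^ K * (n * n) ^ K := by
                  apply Nat.mul_le_mul_right
                  apply Nat.pow_le_pow_left
                  exact Nat.mul_le_mul (by norm_num) (Nat.pow_le_pow_left (by norm_num) _)
              _ = (16 * (n * n)) ^ K * 16 ^ (K * K) := by
                  rw [mul_pow, mul_pow, pow_mul]
                  ring
          exact Nat.le_of_mul_le_mul_right hcancel (Nat.pow_pos (by norm_num))
    -- convert exponent form
    have hexp : (2 : ℕ) ^ (s + 1) = 2 * K := by rw [hK, pow_succ]; ring
    calc (Zset (F := F) n (s + 1 + 2) c a).card ^ 2 ^ (s + 1) * N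
        = (z * z) ^ K * N := by rw [hexp, mul_comm 2 K, pow_mul, ← hZdef, ← hz]; ring
      _ ≤ (16 * (n * n)) ^ K := hgoal
      _ = (4 * n) ^ 2 ^ (s + 1) := by
          rw [show (16 * (n * n) : ℕ) = (4 * n) ^ 2 by ring, ← pow_mul, hexp]

end FFZ

/-- **Lemma (`lem:finitefield`, after Corvaja–Zannier).**
Let `𝔽_q` be a finite field with `q` elements, let `r ≥ 2`, let
`c₁, …, c_r, a₁, …, a_r ∈ 𝔽_q^*` and let `N` be the minimum of the multiplicative
orders of the `a i / a j` (`i ≠ j`) in `𝔽_q^*`. Then the number of integers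
`m ∈ [0, q-2]` with `∑ i, c i * (a i)^m = 0` is at most `4(q-1)·N^(-1/2^(r-2))`. -/
theorem finite_field_zeros (q r : ℕ) (hr : 2 ≤ r)
    (F : Type) [Field F] [Fintype F] (hq : Fintype.card F = q)
    (c a : Fin r → Fˣ) (N : ℕ)
    (hN_le : ∀ i j : Fin r, i ≠ j → N ≤ orderOf (a i / a j))
    (hN_mem : ∃ i j : Fin r, i ≠ j ∧ N = orderOf (a i / a j)) :
    (({m : ℕ | m ≤ q - 2 ∧ ∑ i, (c i : F) * (a i : F) ^ m = 0}).ncard : ℝ) ≤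
      4 * ((q : ℝ) - 1) * (N : ℝ) ^ (-(1 : ℝ) / 2 ^ (r - 2)) := by
  classical
  obtain ⟨s, rfl⟩ : ∃ s, r = s + 2 := ⟨r - 2, by omega⟩
  have hq2 : 2 ≤ q := hq ▸ Fintype.one_lt_card
  set n := q - 1 with hn
  have hn1 : 1 ≤ n := by omega
  haveI : NeZero n := ⟨by omega⟩
  have hcardU : Fintype.card Fˣ = n := by rw [Fintype.card_units, hq]
  obtain ⟨i, j, hij, hNeq⟩ := hN_mem
  have hN1 : 1 ≤ N := hNeq ▸ orderOf_pos _
  have hkey := FFZ.key (F := F) hcardU s c a N hN1 hN_le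
  set K := 2 ^ s with hK
  have hK0 : K ≠ 0 := by positivity
  -- identify the set with the Zset
  have hseteq : {m : ℕ | m ≤ q - 2 ∧ ∑ i, (c i : F) * (a i : F) ^ m = 0} =
      ↑((Finset.range n).filter fun m => ∑ i, (c i : F) * (a i : F) ^ m = 0) := by
    ext m
    simp only [Set.mem_setOf_eq, Finset.coe_filter, Finset.mem_range]
    constructor
    · rintro ⟨h1, h2⟩; exact ⟨by omega, h2⟩
    · rintro ⟨h1, h2⟩; exact ⟨by omega, h2⟩
  have hcards : ((Finset.range n).filter
      fun m => ∑ i, (c i : F) * (a i : F) ^ m = 0).card =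
      (FFZ.Zset (F := F) n (s + 2) c a).card := by
    refine Finset.card_bij (fun m _ => (m : ZMod n)) ?_ ?_ ?_
    · intro m hm
      obtain ⟨hm1, hm2⟩ := Finset.mem_filter.1 hm
      rw [Finset.mem_range] at hm1
      apply FFZ.mem_Zset.2
      rwa [ZMod.val_cast_of_lt hm1]
    · intro m1 hm1 m2 hm2 h
      have h1 := Finset.mem_range.1 (Finset.mem_filter.1 hm1).1
      have h2 := Finset.mem_range.1 (Finset.mem_filter.1 hm2).1
      calc m1 = (ZMod.val ((m1 : ZMod n))) := (ZMod.val_cast_of_lt h1).symm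
        _ = (ZMod.val ((m2 : ZMod n))) := congrArg ZMod.val h
        _ = m2 := ZMod.val_cast_of_lt h2
    · intro m' hm'
      refine ⟨ZMod.val m', Finset.mem_filter.2 ⟨Finset.mem_range.2 (ZMod.val_lt m'), ?_⟩,
        ZMod.natCast_rightInverse m'⟩
      exact FFZ.mem_Zset.1 hm'
  rw [hseteq, Set.ncard_coe_finset, hcards]
  set zc := (FFZ.Zset (F := F) n (s + 2) c a).card with hzc
  -- real arithmetic
  have hqn : (q : ℝ) - 1 = (n : ℝ) := by
    rw [hn, Nat.cast_sub (by omega)]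
    norm_num
  have hexp : -(1 : ℝ) / 2 ^ (s + 2 - 2) = -((K : ℝ))⁻¹ := by
    rw [hK]
    push_cast
    ring
  rw [hqn, hexp]
  have hNpos : (0 : ℝ) < (N : ℝ) := by exact_mod_cast hN1
  rw [Real.rpow_neg hNpos.le, ← div_eq_mul_inv, le_div_iff₀ (Real.rpow_pos_of_pos hNpos _)]
  apply le_of_pow_le_pow_left₀ hK0 (by positivity)
  have hpow : ((zc : ℝ) * (N : ℝ) ^ ((K : ℝ))⁻¹) ^ K = (zc : ℝ) ^ K * (N : ℝ) := by
    rw [mul_pow, Real.rpow_inv_natCast_pow hNpos.le hK0]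
  rw [hpow]
  have := hkey
  calc (zc : ℝ) ^ K * (N : ℝ) = ((zc ^ K * N : ℕ) : ℝ) := by push_cast; ring
    _ ≤ (((4 * n) ^ K : ℕ) : ℝ) := by exact_mod_cast hkey
    _ = (4 * (n : ℝ)) ^ K := by push_cast; ring
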